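/- For every natural number K ≥ 1 and all real numbers a_1, …, a_K, the function f(x) = (∑_{i=1}^K 2^x·a_i·e^{−2^x·a_i}) / (∑_{i=1}^K e^{−2^x·a_i}) is differentiable on ℝ and satisfies f'(x) ≤ (log 2)·f(x) for every x ∈ ℝ. -/

import Mathlib

open Real Finset

/-- The soft-max like function
`f(x) = (∑ i, 2^x * a i * exp(-2^x * a i)) / (∑ i, exp(-2^x * a i))`. -/
noncomputable def softMaxLike {K : ℕ} (a : Fin K → ℝ) (x : ℝ) : ℝ :=
  (∑ i, (2 : ℝ) ^ x * a i * Real.exp (-((2 : ℝ) ^ x * a i))) /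
    (∑ i, Real.exp (-((2 : ℝ) ^ x * a i)))

section aux

variable {K : ℕ} (a : Fin K → ℝ)

noncomputable def smlN (x : ℝ) : ℝ :=
  ∑ i, (2 : ℝ) ^ x * a i * Real.exp (-((2 : ℝ) ^ x * a i))

noncomputable def smlG (x : ℝ) : ℝ :=
  ∑ i, Real.exp (-((2 : ℝ) ^ x * a i))

noncomputable def smlS (x : ℝ) : ℝ :=
  ∑ i, ((2 : ℝ) ^ x * a i) ^ 2 * Real.exp (-((2 : ℝ) ^ x * a i))

lemma sml_hu (x : ℝ) (i : Fin K) :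
    HasDerivAt (fun x : ℝ => (2 : ℝ) ^ x * a i)
      (Real.log 2 * ((2 : ℝ) ^ x * a i)) x := by
  have h := ((hasStrictDerivAt_const_rpow (by norm_num : (0:ℝ) < 2) x).hasDerivAt).mul_const (a i)
  exact h.congr_deriv (by ring)

lemma sml_hG (x : ℝ) :
    HasDerivAt (smlG a) (-(Real.log 2 * smlN a x)) x := by
  have h : HasDerivAt (smlG a)
      (∑ i, Real.exp (-((2 : ℝ) ^ x * a i)) * -(Real.log 2 * ((2 : ℝ) ^ x * a i))) x :=
    HasDerivAt.fun_sum fun i _ => ((sml_hu a x i).neg).exp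
  convert h using 1
  rw [smlN, Finset.mul_sum, ← Finset.sum_neg_distrib]
  exact Finset.sum_congr rfl fun i _ => by ring

lemma sml_hN (x : ℝ) :
    HasDerivAt (smlN a) (Real.log 2 * (smlN a x - smlS a x)) x := by
  have h : HasDerivAt (smlN a)
      (∑ i, (Real.log 2 * ((2 : ℝ) ^ x * a i) * Real.exp (-((2 : ℝ) ^ x * a i)) +
        ((2 : ℝ) ^ x * a i) *
          (Real.exp (-((2 : ℝ) ^ x * a i)) * -(Real.log 2 * ((2 : ℝ) ^ x * a i))))) x :=
    HasDerivAt.fun_sum fun i _ => (sml_hu a x i).mul (((sml_hu a x i).neg).exp)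
  convert h using 1
  rw [smlN, smlS, mul_sub, Finset.mul_sum, Finset.mul_sum, ← Finset.sum_sub_distrib]
  exact Finset.sum_congr rfl fun i _ => by ring

lemma sml_Gpos (hK : 1 ≤ K) (x : ℝ) : 0 < smlG a x :=
  Finset.sum_pos (fun i _ => Real.exp_pos _)
    (Finset.univ_nonempty_iff.mpr ⟨⟨0, hK⟩⟩)

lemma sml_CS (x : ℝ) : (smlN a x) ^ 2 ≤ smlS a x * smlG a x := by
  have hexp2 : ∀ s : ℝ, Real.exp (s / 2) ^ 2 = Real.exp s := fun s => by
    rw [sq, ← Real.exp_add, add_halves]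
  have h := Finset.sum_mul_sq_le_sq_mul_sq Finset.univ
    (fun i : Fin K => (2 : ℝ) ^ x * a i * Real.exp (-((2 : ℝ) ^ x * a i) / 2))
    (fun i : Fin K => Real.exp (-((2 : ℝ) ^ x * a i) / 2))
  simp only [mul_pow, hexp2] at h
  calc (smlN a x) ^ 2
      = (∑ i, ((2 : ℝ) ^ x * a i * Real.exp (-((2 : ℝ) ^ x * a i) / 2)) *
          Real.exp (-((2 : ℝ) ^ x * a i) / 2)) ^ 2 := by
        rw [smlN]; congr 1
        refine Finset.sum_congr rfl fun i _ => ?_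
        rw [← hexp2 (-((2 : ℝ) ^ x * a i))]; ring
    _ ≤ _ := h.trans_eq (by
        rw [smlS, smlG]
        congr 1
        exact Finset.sum_congr rfl fun i _ => by ring)

lemma sml_hasDeriv (hK : 1 ≤ K) (x : ℝ) :
    HasDerivAt (softMaxLike a)
      ((Real.log 2 * (smlN a x - smlS a x) * smlG a x -
        smlN a x * (-(Real.log 2 * smlN a x))) / (smlG a x) ^ 2) x := by
  have h := (sml_hN a x).div (sml_hG a x) (sml_Gpos a hK x).ne'
  exact h

end aux

/-- The soft-max like function is differentiable and satisfies `f'(x) ≤ (log 2) * f(x)`. -/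
theorem softMaxLike_deriv_le (K : ℕ) (hK : 1 ≤ K) (a : Fin K → ℝ) :
    Differentiable ℝ (softMaxLike a) ∧
      ∀ x : ℝ, deriv (softMaxLike a) x ≤ Real.log 2 * softMaxLike a x := by
  refine ⟨fun x => (sml_hasDeriv a hK x).differentiableAt, fun x => ?_⟩
  rw [(sml_hasDeriv a hK x).deriv]
  have hg := sml_Gpos a hK x
  have hcs := sml_CS a x
  have hlog : 0 ≤ Real.log 2 := Real.log_nonneg (by norm_num)
  have hfx : softMaxLike a x = smlN a x / smlG a x := rfl
  rw [hfx, div_le_iff₀ (by positivity)]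
  have : Real.log 2 * (smlN a x / smlG a x) * smlG a x ^ 2
      = Real.log 2 * (smlN a x * smlG a x) := by
    field_simp
  rw [this]
  have h1 : Real.log 2 * (smlN a x - smlS a x) * smlG a x -
      smlN a x * (-(Real.log 2 * smlN a x))
      = Real.log 2 * (smlN a x * smlG a x) -
        Real.log 2 * (smlS a x * smlG a x - smlN a x ^ 2) := by ring
  rw [h1]
  have h2 : 0 ≤ Real.log 2 * (smlS a x * smlG a x - smlN a x ^ 2) :=
    mul_nonneg hlog (by linarith)
  linarith
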